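/- Let u and k be positive integers, let a_1, …, a_k be sampled independently and uniformly at random from the integer interval {−u, …, u}, and define p(k, s) := Pr[a_1 + ⋯ + a_k = s] for integers s. Then for every integer s ≥ 0, p(k, s+1) ≤ p(k, s). -/

import Mathlib

/-- `pSum u k s` is the probability that the sum of `k` independent uniform random
integers from `{-u, …, u}` equals `s`. -/
noncomputable def pSum (u k : ℕ) (s : ℤ) : ℝ :=
  (((Fintype.piFinset fun _ : Fin k => Finset.Icc (-(u : ℤ)) (u : ℤ)).filter
      (fun a : Fin k → ℤ => ∑ i, a i = s)).card : ℝ) / (2 * (u : ℝ) + 1) ^ k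

noncomputable def Ncnt (u k : ℕ) (s : ℤ) : ℕ :=
  ((Fintype.piFinset fun _ : Fin k => Finset.Icc (-(u : ℤ)) (u : ℤ)).filter
      (fun a : Fin k → ℤ => ∑ i, a i = s)).card

lemma Ncnt_zero (u : ℕ) (s : ℤ) : Ncnt u 0 s = if s = 0 then 1 else 0 := by
  rcases eq_or_ne s 0 with h | h <;>
    simp [Ncnt, h, Finset.filter_true_of_mem, Finset.filter_eq_empty_iff] <;>
    omega

lemma Ncnt_neg (u k : ℕ) (s : ℤ) : Ncnt u k (-s) = Ncnt u k s := by
  unfold Ncnt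
  apply Finset.card_nbij' (i := fun a => -a) (j := fun a => -a)
  · intro a ha
    simp only [Finset.mem_coe, Finset.mem_filter, Fintype.mem_piFinset, Finset.mem_Icc] at *
    refine ⟨fun i => by have := ha.1 i; simp [Pi.neg_apply]; omega, ?_⟩
    simp only [Pi.neg_apply]
    rw [Finset.sum_neg_distrib, ha.2]; try ring
  · intro a ha
    simp only [Finset.mem_coe, Finset.mem_filter, Fintype.mem_piFinset, Finset.mem_Icc] at *
    refine ⟨fun i => by have := ha.1 i; simp [Pi.neg_apply]; omega, ?_⟩
    simp only [Pi.neg_apply]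
    rw [Finset.sum_neg_distrib, ha.2]; try ring
  · intro a _; simp
  · intro a _; simp

lemma Ncnt_succ (u k : ℕ) (s : ℤ) :
    Ncnt u (k + 1) s = ∑ t ∈ Finset.Icc (-(u : ℤ)) (u : ℤ), Ncnt u k (s - t) := by
  unfold Ncnt
  rw [Finset.card_eq_sum_card_fiberwise (f := fun a : Fin (k+1) → ℤ => a 0)
      (t := Finset.Icc (-(u : ℤ)) (u : ℤ))]
  · refine Finset.sum_congr rfl fun t ht => ?_
    apply Finset.card_nbij' (i := fun a => Fin.tail a) (j := fun b => Fin.cons t b)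
    · intro a ha
      simp only [Finset.mem_coe, Finset.mem_filter, Fintype.mem_piFinset, Fin.sum_univ_succ] at *
      obtain ⟨⟨h1, h2⟩, h3⟩ := ha
      refine ⟨fun i => h1 i.succ, ?_⟩
      simp only [Fin.tail]
      omega
    · intro b hb
      simp only [Finset.mem_coe, Finset.mem_filter, Fintype.mem_piFinset, Fin.sum_univ_succ,
        Fin.cons_zero, Fin.cons_succ] at *
      obtain ⟨h1, h2⟩ := hb
      refine ⟨⟨fun i => ?_, by omega⟩, trivial⟩
      refine Fin.cases ?_ ?_ i <;> simp [ht, h1]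
    · intro a ha
      simp only [Finset.mem_coe, Finset.mem_filter] at ha
      rw [← ha.2]
      exact Fin.cons_self_tail a
    · intro b _; simp
  · intro a ha
    simp only [Finset.mem_coe, Finset.mem_filter, Fintype.mem_piFinset] at ha
    exact ha.1 0

lemma sum_shift (f : ℤ → ℕ) (s : ℤ) (u : ℕ) :
    ∑ t ∈ Finset.Icc (-(u : ℤ)) (u : ℤ), f (s - t)
      = ∑ j ∈ Finset.Icc (s - u) (s + u), f j := by
  apply Finset.sum_nbij' (i := fun t => s - t) (j := fun j => s - j) <;>
    intros <;> simp_all [Finset.mem_Icc] <;> omega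

lemma Ncnt_step (u : ℕ) : ∀ k, ∀ s : ℤ, 0 ≤ s → Ncnt u k (s + 1) ≤ Ncnt u k s := by
  intro k
  induction k with
  | zero =>
    intro s hs
    rw [Ncnt_zero, Ncnt_zero]
    split_ifs <;> omega
  | succ k ih =>
    have mono : ∀ (a : ℤ) (n : ℕ), 0 ≤ a → Ncnt u k (a + n) ≤ Ncnt u k a := by
      intro a n ha
      induction n with
      | zero => simp
      | succ n ihn =>
        refine le_trans ?_ ihn
        have h := ih (a + n) (by positivity)
        have e : a + ((n : ℤ) + 1) = a + n + 1 := by ring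
        rw [Nat.cast_succ, e]
        exact h
    have mono' : ∀ a b : ℤ, |a| ≤ b → Ncnt u k b ≤ Ncnt u k a := by
      intro a b hab
      have h1 : Ncnt u k b ≤ Ncnt u k |a| := by
        have := mono |a| (b - |a|).toNat (abs_nonneg a)
        rwa [Int.toNat_of_nonneg (by omega), add_sub_cancel] at this
      refine le_trans h1 ?_
      rcases le_or_gt 0 a with h | h
      · rw [abs_of_nonneg h]
      · rw [abs_of_neg h, Ncnt_neg]
    intro s hs
    rw [Ncnt_succ, Ncnt_succ, sum_shift, sum_shift]
    have e1 : Finset.Icc (s - (u:ℤ)) (s + u)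
        = insert (s - u) (Finset.Icc (s + 1 - u) (s + u)) := by
      ext x; simp only [Finset.mem_Icc, Finset.mem_insert]; omega
    have e2 : Finset.Icc (s + 1 - (u:ℤ)) (s + 1 + u)
        = insert (s + u + 1) (Finset.Icc (s + 1 - u) (s + u)) := by
      ext x; simp only [Finset.mem_Icc, Finset.mem_insert]; omega
    rw [e1, e2, Finset.sum_insert (by simp only [Finset.mem_Icc]; omega),
      Finset.sum_insert (by simp only [Finset.mem_Icc]; omega)]
    have key : Ncnt u k (s + u + 1) ≤ Ncnt u k (s - u) :=
      mono' _ _ (by rcases abs_cases (s - (u:ℤ)) with ⟨h,_⟩|⟨h,_⟩ <;> omega)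
    omega

/-- For positive integers `u, k` and every integer `s ≥ 0`,
`p(k, s+1) ≤ p(k, s)`. -/
theorem stmt_9 (u k : ℕ) (hu : 1 ≤ u) (hk : 1 ≤ k) (s : ℤ) (hs : 0 ≤ s) :
    pSum u k (s + 1) ≤ pSum u k s := by
  unfold pSum
  have hstep := Ncnt_step u k s hs
  unfold Ncnt at hstep
  have hd : (0:ℝ) < (2 * (u:ℝ) + 1) ^ k := by positivity
  gcongr
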